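/- Let f be a positive monotone decreasing function on (0,∞) for which Q = ∫₀^∞ f dx is finite. Then -∫₀^∞ f(x)(1 + ln(x f(x))) dx ≥ -Q ln Q. -/

import Mathlib

open MeasureTheory Filter

/-- Let `f` be a positive monotone decreasing function on `(0,∞)` for which
`Q = ∫₀^∞ f dx` is finite (and for which the entropy integral exists).  Then
`-∫₀^∞ f(x)(1 + ln(x f(x))) dx ≥ -Q ln Q`. -/
theorem antitone_integral_log_inequality_Ioi (f : ℝ → ℝ)
    (hpos : ∀ x ∈ Set.Ioi (0:ℝ), 0 < f x)
    (hmono : AntitoneOn f (Set.Ioi (0:ℝ)))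
    (hint : IntegrableOn f (Set.Ioi (0:ℝ)))
    (hint2 : IntegrableOn (fun x => f x * (1 + Real.log (x * f x))) (Set.Ioi (0:ℝ)))
    (Q : ℝ) (hQ : Q = ∫ x in Set.Ioi (0:ℝ), f x) :
    (-∫ x in Set.Ioi (0:ℝ), f x * (1 + Real.log (x * f x)))
      ≥ -Q * Real.log Q := by
  set φ : ℝ → ℝ := fun x => f x * (1 + Real.log (x * f x)) with hφdef
  set F : ℝ → ℝ := fun u => ∫ t in (0:ℝ)..u, f t with hFdef
  set c : ℝ → ℝ := fun x => sSup (f '' Set.Ioi x) with hcdef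
  set G : ℝ → ℝ := fun u => F u * Real.log (F u) with hGdef
  -- basic facts
  have hIoc : ∀ {x : ℝ}, 0 < x → IntegrableOn f (Set.Ioc 0 x) := fun {x} hx =>
    hint.mono_set Set.Ioc_subset_Ioi_self
  have hII : ∀ {x : ℝ}, 0 < x → IntervalIntegrable f volume 0 x := fun {x} hx => by
    rw [intervalIntegrable_iff_integrableOn_Ioc_of_le hx.le]; exact hIoc hx
  have hbdd : ∀ {x : ℝ}, 0 < x → BddAbove (f '' Set.Ioi x) := fun {x} hx =>
    ⟨f x, by rintro _ ⟨t, ht, rfl⟩; exact hmono hx (hx.trans ht) (le_of_lt ht)⟩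
  have hctend : ∀ {x : ℝ}, 0 < x → Tendsto f (nhdsWithin x (Set.Ioi x)) (nhds (c x)) :=
    fun {x} hx =>
    AntitoneOn.tendsto_nhdsGT (hmono.mono (Set.Ioi_subset_Ioi hx.le)) (hbdd hx)
  have hFeq : ∀ {x : ℝ}, 0 < x → F x = ∫ t in Set.Ioc 0 x, f t := fun {x} hx =>
    intervalIntegral.integral_of_le hx.le
  have hxf_le_F : ∀ {x : ℝ}, 0 < x → x * f x ≤ F x := by
    intro x hx
    rw [hFeq hx]
    have h1 : ∫ _t in Set.Ioc 0 x, f x = x * f x := by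
      rw [setIntegral_const, Real.volume_real_Ioc_of_le hx.le, smul_eq_mul, sub_zero]
    rw [← h1]
    refine setIntegral_mono_on (integrableOn_const ?_) (hIoc hx)
      measurableSet_Ioc ?_
    · rw [Real.volume_Ioc]; exact ENNReal.ofReal_ne_top
    · intro t ht
      exact hmono ht.1 hx ht.2
  have hFpos : ∀ {x : ℝ}, 0 < x → 0 < F x := fun {x} hx =>
    lt_of_lt_of_le (mul_pos hx (hpos x hx)) (hxf_le_F hx)
  -- the derivative of G from the right
  have hderivG : ∀ {x : ℝ}, 0 < x →
      HasDerivWithinAt G (c x * (Real.log (F x) + 1)) (Set.Ioi x) x := by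
    intro x hx
    have hmeasf : StronglyMeasurableAtFilter f (nhdsWithin x (Set.Ioi x)) volume :=
      ⟨Set.Ioi x, self_mem_nhdsWithin,
        (hint.mono_set (Set.Ioi_subset_Ioi hx.le)).aestronglyMeasurable⟩
    have hF : HasDerivWithinAt F (c x) (Set.Ici x) x :=
      intervalIntegral.integral_hasDerivWithinAt_of_tendsto_ae_right
        (s := Set.Ici x) (t := Set.Ioi x)
        (hII hx) hmeasf ((hctend hx).mono_left inf_le_left)
    have hF' := hF.mono Set.Ioi_subset_Ici_self
    have h2 : HasDerivAt (fun t : ℝ => t * Real.log t) (Real.log (F x) + 1) (F x) :=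
      Real.hasDerivAt_mul_log (hFpos hx).ne'
    have h3 := h2.comp_hasDerivWithinAt x hF'
    rw [mul_comm] at h3
    exact h3
  have hcontF : ∀ {b : ℝ}, 0 < b → ContinuousOn F (Set.Icc 0 b) := by
    intro b hb
    have h0 : (0:ℝ) ∈ Set.uIcc (0:ℝ) b := Set.left_mem_uIcc
    have := intervalIntegral.continuousOn_primitive_interval' (hII hb) h0
    rwa [Set.uIcc_of_le hb.le] at this
  -- the countable bad set
  have hDnull : volume {x : ℝ | 0 < x ∧ c x ≠ f x} = 0 := by
    have key : ∀ a : ℝ, 0 < a → Set.Countable {x : ℝ | a < x ∧ c x ≠ f x} := by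
      intro a ha
      have hg : Monotone (fun y : ℝ => -f (max y a)) := by
        intro y z hyz
        simp only [neg_le_neg_iff]
        exact hmono (lt_of_lt_of_le ha (le_max_right y a))
          (lt_of_lt_of_le ha (le_max_right z a)) (max_le_max hyz le_rfl)
      refine ((hg.monotoneOn Set.univ).countable_not_continuousWithinAt_Ioi).mono ?_
      rintro x ⟨hax, hne⟩
      simp only [Set.mem_setOf_eq, Set.mem_univ, Set.univ_inter, true_and]
      intro hcont
      have hx0 : (0:ℝ) < x := ha.trans hax
      have h1 : Tendsto f (nhdsWithin x (Set.Ioi x)) (nhds (f x)) := by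
        have h1' : Tendsto (fun y => f (y ⊔ a)) (nhdsWithin x (Set.Ioi x))
            (nhds (f (x ⊔ a))) := by
          have h2' := hcont.tendsto.neg
          simpa using h2'
        have hval : f (x ⊔ a) = f x := by rw [max_eq_left hax.le]
        rw [hval] at h1'
        refine Tendsto.congr' ?_ h1'
        filter_upwards [self_mem_nhdsWithin] with y hy
        rw [max_eq_left (hax.trans hy).le]
      exact hne (tendsto_nhds_unique (hctend hx0) h1)
    have hsub : {x : ℝ | 0 < x ∧ c x ≠ f x} ⊆
        ⋃ n : ℕ, {x : ℝ | 1/(n+1:ℝ) < x ∧ c x ≠ f x} := by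
      rintro x ⟨hx0, hne⟩
      obtain ⟨n, hn⟩ := exists_nat_one_div_lt hx0
      exact Set.mem_iUnion.2 ⟨n, hn, hne⟩
    exact measure_mono_null hsub
      ((Set.countable_iUnion fun n => key _ (by positivity)).measure_zero _)
  -- the modified integrand
  set ψ : ℝ → ℝ := fun x =>
    if 0 < x ∧ c x ≠ f x then c x * (Real.log (F x) + 1) else φ x with hψdef
  have hψae : φ =ᵐ[volume] ψ := by
    have hsub : {x : ℝ | ¬ φ x = ψ x} ⊆ {x : ℝ | 0 < x ∧ c x ≠ f x} := by
      intro x hx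
      by_contra h
      simp only [Set.mem_setOf_eq] at h
      refine hx ?_
      simp only [hψdef]
      rw [if_neg h]
    exact ae_iff.2 (measure_mono_null hsub hDnull)
  -- the key estimate on compact subintervals
  have main : ∀ a b : ℝ, 0 < a → a ≤ b → ∫ x in Set.Ioc a b, φ x ≤ G b - G a := by
    intro a b ha hab
    have hb : 0 < b := lt_of_lt_of_le ha hab
    have hIcc : Set.Icc a b ⊆ Set.Ioi 0 := fun x hx => lt_of_lt_of_le ha hx.1
    have hφint : IntegrableOn φ (Set.Icc a b) := hint2.mono_set hIcc
    have hψint : IntegrableOn ψ (Set.Icc a b) := hφint.congr (ae_restrict_of_ae hψae)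
    have hGcont : ContinuousOn G (Set.Icc a b) := by
      have := Real.continuous_mul_log.comp_continuousOn
        ((hcontF hb).mono (Set.Icc_subset_Icc_left ha.le))
      exact this
    have hψle : ∀ x ∈ Set.Ioo a b, ψ x ≤ c x * (Real.log (F x) + 1) := by
      intro x hx
      have hx0 : (0:ℝ) < x := ha.trans hx.1
      simp only [hψdef]
      by_cases h : 0 < x ∧ c x ≠ f x
      · rw [if_pos h]
      · rw [if_neg h]
        push_neg at h
        have hcf : c x = f x := h hx0
        have hfx := hpos x hx0
        have hlog : Real.log (x * f x) ≤ Real.log (F x) :=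
          Real.log_le_log (mul_pos hx0 hfx) (hxf_le_F hx0)
        calc φ x ≤ f x * (1 + Real.log (F x)) := by
              exact mul_le_mul_of_nonneg_left (by linarith) hfx.le
          _ = c x * (Real.log (F x) + 1) := by rw [hcf]; ring
    have step := intervalIntegral.integral_le_sub_of_hasDeriv_right_of_le hab hGcont
      (fun x hx => hderivG (ha.trans hx.1)) hψint hψle
    have heq : ∫ x in Set.Ioc a b, φ x = ∫ y in a..b, ψ y := by
      rw [intervalIntegral.integral_of_le hab]
      exact integral_congr_ae (ae_restrict_of_ae hψae)
    rw [heq]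
    exact step
  -- limits
  have haux : ∀ n : ℕ, (0:ℝ) < 1/(n+1:ℝ) := fun n => by positivity
  have haux2 : ∀ n : ℕ, (1:ℝ)/(n+1:ℝ) ≤ (n:ℝ)+1 := by
    intro n
    have h0 : (0:ℝ) ≤ (n:ℝ) := Nat.cast_nonneg n
    have h2 : (1:ℝ)/(n+1:ℝ) ≤ 1 := by
      rw [div_le_one (by positivity)]
      linarith
    linarith
  have hsmeas : ∀ n : ℕ, MeasurableSet (Set.Ioc (1/(n+1:ℝ)) ((n:ℝ)+1)) :=
    fun n => measurableSet_Ioc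
  have hsmono : Monotone (fun n : ℕ => Set.Ioc (1/(n+1:ℝ)) ((n:ℝ)+1)) := by
    intro m n hmn
    have hc : ((m:ℝ)+1) ≤ ((n:ℝ)+1) := by
      have := (Nat.cast_le (α := ℝ)).2 hmn; linarith
    exact Set.Ioc_subset_Ioc (one_div_le_one_div_of_le (by positivity) hc) hc
  have hsunion : (⋃ n : ℕ, Set.Ioc (1/(n+1:ℝ)) ((n:ℝ)+1)) = Set.Ioi 0 := by
    ext x
    simp only [Set.mem_iUnion, Set.mem_Ioc, Set.mem_Ioi]
    constructor
    · rintro ⟨n, h1, _⟩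
      exact lt_trans (haux n) h1
    · intro hx
      obtain ⟨n, hn⟩ := exists_nat_one_div_lt hx
      obtain ⟨m, hm⟩ := exists_nat_ge x
      refine ⟨max n m, lt_of_le_of_lt ?_ hn, ?_⟩
      · apply one_div_le_one_div_of_le (by positivity)
        have : (n:ℝ) ≤ ((max n m : ℕ):ℝ) := (Nat.cast_le (α := ℝ)).2 (le_max_left n m)
        linarith
      · have : (m:ℝ) ≤ ((max n m : ℕ):ℝ) := (Nat.cast_le (α := ℝ)).2 (le_max_right n m)
        linarith
  have htendφ : Tendsto (fun n : ℕ => ∫ x in Set.Ioc (1/(n+1:ℝ)) ((n:ℝ)+1), φ x) atTop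
      (nhds (∫ x in Set.Ioi (0:ℝ), φ x)) := by
    have h := tendsto_setIntegral_of_monotone hsmeas hsmono (by rw [hsunion]; exact hint2)
    rwa [hsunion] at h
  have htendF : Tendsto (fun n : ℕ => F ((n:ℝ)+1)) atTop (nhds Q) := by
    have hmeas2 : ∀ n : ℕ, MeasurableSet (Set.Ioc (0:ℝ) ((n:ℝ)+1)) :=
      fun n => measurableSet_Ioc
    have hmono2 : Monotone (fun n : ℕ => Set.Ioc (0:ℝ) ((n:ℝ)+1)) := by
      intro m n hmn
      refine Set.Ioc_subset_Ioc le_rfl ?_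
      have := (Nat.cast_le (α := ℝ)).2 hmn; linarith
    have hun2 : (⋃ n : ℕ, Set.Ioc (0:ℝ) ((n:ℝ)+1)) = Set.Ioi 0 := by
      ext x
      simp only [Set.mem_iUnion, Set.mem_Ioc, Set.mem_Ioi]
      constructor
      · rintro ⟨n, h1, _⟩; exact h1
      · intro hx
        obtain ⟨m, hm⟩ := exists_nat_ge x
        exact ⟨m, hx, by linarith⟩
    have h := tendsto_setIntegral_of_monotone hmeas2 hmono2 (by rw [hun2]; exact hint)
    rw [hun2, ← hQ] at h
    refine h.congr fun n => ?_
    exact (hFeq (by positivity)).symm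
  have htendGb : Tendsto (fun n : ℕ => G ((n:ℝ)+1)) atTop (nhds (Q * Real.log Q)) := by
    have h := (Real.continuous_mul_log.tendsto Q).comp htendF
    simpa [hGdef, Function.comp_def] using h
  have htendFa : Tendsto (fun n : ℕ => F (1/(n+1:ℝ))) atTop (nhds 0) := by
    have hcw : ContinuousWithinAt F (Set.Icc 0 1) 0 := (hcontF one_pos) 0 ⟨le_rfl, zero_le_one⟩
    have hF0 : F 0 = 0 := intervalIntegral.integral_same
    have htend0 : Tendsto (fun n : ℕ => 1/(n+1:ℝ)) atTop (nhds 0) :=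
      tendsto_one_div_add_atTop_nhds_zero_nat
    have hmem : ∀ n : ℕ, 1/(n+1:ℝ) ∈ Set.Icc (0:ℝ) 1 := by
      intro n
      refine ⟨(haux n).le, ?_⟩
      rw [div_le_one (by positivity)]
      have := Nat.cast_nonneg (α := ℝ) n
      linarith
    have h := hcw.tendsto.comp (tendsto_nhdsWithin_of_tendsto_nhds_of_eventually_within _ htend0
      (Filter.Eventually.of_forall hmem))
    rw [hF0] at h
    simpa [Function.comp_def] using h
  have htendGa : Tendsto (fun n : ℕ => G (1/(n+1:ℝ))) atTop (nhds 0) := by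
    have h := (Real.continuous_mul_log.tendsto 0).comp htendFa
    simpa [hGdef, Function.comp_def] using h
  have hfinal : (∫ x in Set.Ioi (0:ℝ), φ x) ≤ Q * Real.log Q - 0 := by
    refine le_of_tendsto_of_tendsto' htendφ (htendGb.sub htendGa) fun n => ?_
    exact main _ _ (haux n) (haux2 n)
  have : (∫ x in Set.Ioi (0:ℝ), φ x) ≤ Q * Real.log Q := by linarith
  linarith
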